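/- (Lorentz–Luxemburg theorem) Let X be a Banach space contained in L^0(ℝ^n) satisfying the lattice property (L) and the saturation property (Sa). Then X satisfies the Fatou property (F) if and only if the second Köthe dual X'' coincides with X with equality of norms: X'' = X as sets and ‖f‖_{X''} = ‖f‖_X for all f ∈ X. -/

import Mathlib

open MeasureTheory Filter ENNReal

noncomputable section

/-- ℝⁿ as a Euclidean space. -/
abbrev Rn (n : ℕ) := EuclideanSpace ℝ (Fin n)

/-- A Banach space `X` contained in `L⁰(ℝⁿ)`: a collection of (a.e. equivalence
classes of) measurable functions on `ℝⁿ`, with a complete norm. -/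
structure BanachInL0 (n : ℕ) where
  carrier : Set (Rn n → ℝ)
  norm : (Rn n → ℝ) → ℝ
  mem_congr : ∀ {f g : Rn n → ℝ}, f =ᵐ[volume] g → f ∈ carrier → g ∈ carrier
  norm_congr : ∀ {f g : Rn n → ℝ}, f =ᵐ[volume] g → norm f = norm g
  aemeasurable : ∀ {f : Rn n → ℝ}, f ∈ carrier → AEMeasurable f volume
  zero_mem : (0 : Rn n → ℝ) ∈ carrier
  add_mem : ∀ {f g : Rn n → ℝ}, f ∈ carrier → g ∈ carrier → f + g ∈ carrier
  smul_mem : ∀ (c : ℝ) {f : Rn n → ℝ}, f ∈ carrier → c • f ∈ carrier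
  norm_nonneg : ∀ f : Rn n → ℝ, 0 ≤ norm f
  norm_eq_zero : ∀ {f : Rn n → ℝ}, f ∈ carrier → norm f = 0 → f =ᵐ[volume] (0 : Rn n → ℝ)
  norm_zero : norm 0 = 0
  norm_add_le : ∀ {f g : Rn n → ℝ}, f ∈ carrier → g ∈ carrier → norm (f + g) ≤ norm f + norm g
  norm_smul : ∀ (c : ℝ) (f : Rn n → ℝ), norm (c • f) = |c| * norm f
  complete : ∀ F : ℕ → Rn n → ℝ, (∀ k, F k ∈ carrier) →
    (∀ ε : ℝ, 0 < ε → ∃ N : ℕ, ∀ k l, N ≤ k → N ≤ l → norm (F k - F l) < ε) →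
    ∃ g ∈ carrier, Tendsto (fun k => norm (F k - g)) atTop (nhds 0)

namespace BanachInL0

variable {n : ℕ}

/-- The lattice property (L). -/
def PropL (X : BanachInL0 n) : Prop :=
  ∀ f g : Rn n → ℝ, f ∈ X.carrier → AEMeasurable g volume →
    (∀ᵐ x ∂volume, |g x| ≤ |f x|) → g ∈ X.carrier ∧ X.norm g ≤ X.norm f

/-- The Fatou property (F). -/
def PropF (X : BanachInL0 n) : Prop :=
  ∀ (F : ℕ → Rn n → ℝ) (f : Rn n → ℝ), (∀ k, F k ∈ X.carrier) → AEMeasurable f volume →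
    (∀ᵐ x ∂volume, (∀ k, 0 ≤ F k x) ∧ Monotone (fun k => F k x) ∧
      Tendsto (fun k => F k x) atTop (nhds (f x))) →
    BddAbove (Set.range fun k => X.norm (F k)) →
    f ∈ X.carrier ∧ X.norm f = ⨆ k, X.norm (F k)

/-- The saturation property (Sa). -/
def PropSa (X : BanachInL0 n) : Prop :=
  ∀ E : Set (Rn n), MeasurableSet E → 0 < volume E →
    ∃ F : Set (Rn n), MeasurableSet F ∧ F ⊆ E ∧ 0 < volume F ∧
      F.indicator (fun _ => (1 : ℝ)) ∈ X.carrier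

/-- Property (BSi): the indicator of every ball belongs to `X`. -/
def PropBSi (X : BanachInL0 n) : Prop :=
  ∀ (c : Rn n) (r : ℝ), 0 < r →
    (Metric.ball c r).indicator (fun _ => (1 : ℝ)) ∈ X.carrier

/-- Property (BLI): functions in `X` are locally integrable, uniformly on each ball. -/
def PropBLI (X : BanachInL0 n) : Prop :=
  ∀ (c : Rn n) (r : ℝ), 0 < r → ∃ C : ℝ, ∀ f ∈ X.carrier,
    ∫⁻ y in Metric.ball c r, ENNReal.ofReal |f y| ≤ ENNReal.ofReal (C * X.norm f)

/-- Property (Si): the indicator of every set of finite measure belongs to `X`. -/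
def PropSi (X : BanachInL0 n) : Prop :=
  ∀ E : Set (Rn n), MeasurableSet E → volume E < ∞ →
    E.indicator (fun _ => (1 : ℝ)) ∈ X.carrier

/-- Property (LI): functions in `X` are integrable on sets of finite measure,
uniformly on each such set. -/
def PropLI (X : BanachInL0 n) : Prop :=
  ∀ E : Set (Rn n), MeasurableSet E → volume E < ∞ → ∃ C : ℝ, ∀ f ∈ X.carrier,
    ∫⁻ y in E, ENNReal.ofReal |f y| ≤ ENNReal.ofReal (C * X.norm f)

/-- A saturated Banach function space: (L), (F) and (Sa). -/
def IsSaturatedBFS (X : BanachInL0 n) : Prop :=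
  X.PropL ∧ X.PropF ∧ X.PropSa

/-- A ball Banach function space: (L), (F), (BSi) and (BLI). -/
def IsBallBFS (X : BanachInL0 n) : Prop :=
  X.PropL ∧ X.PropF ∧ X.PropBSi ∧ X.PropBLI

end BanachInL0

/-- The Köthe dual of a set `S ⊆ L⁰(ℝⁿ)` of measurable functions. -/
def kotheDual {n : ℕ} (S : Set (Rn n → ℝ)) : Set (Rn n → ℝ) :=
  {g | AEMeasurable g volume ∧ ∀ f ∈ S, Integrable (fun x => f x * g x) volume}

/-- The Köthe dual (semi)norm associated with a set `S` normed by `N : S → ℝ`. -/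
def kotheDualNorm {n : ℕ} (S : Set (Rn n → ℝ)) (N : (Rn n → ℝ) → ℝ)
    (g : Rn n → ℝ) : ℝ≥0∞ :=
  ⨆ (f : Rn n → ℝ) (_ : f ∈ S ∧ N f ≤ 1), ∫⁻ x, ENNReal.ofReal |f x * g x|

/-- The Köthe dual (semi)norm associated with a set `S` normed by `N : S → ℝ≥0∞`. -/
def kotheDualNormE {n : ℕ} (S : Set (Rn n → ℝ)) (N : (Rn n → ℝ) → ℝ≥0∞)
    (g : Rn n → ℝ) : ℝ≥0∞ :=
  ⨆ (f : Rn n → ℝ) (_ : f ∈ S ∧ N f ≤ 1), ∫⁻ x, ENNReal.ofReal |f x * g x|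

/-- The Hardy–Littlewood maximal operator on `ℝⁿ`. -/
def hlMaximal {n : ℕ} (f : Rn n → ℝ) (x : Rn n) : ℝ≥0∞ :=
  ⨆ (c : Rn n) (r : ℝ) (_ : x ∈ Metric.ball c r),
    (volume (Metric.ball c r))⁻¹ * ∫⁻ y in Metric.ball c r, ENNReal.ofReal |f y|


section LLaux

open Set

variable {n : ℕ} {X : BanachInL0 n}

lemma LLabs_mem (hL : X.PropL) {f : Rn n → ℝ} (hf : f ∈ X.carrier) :
    (fun x => |f x|) ∈ X.carrier ∧ X.norm (fun x => |f x|) = X.norm f := by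
  have hmeas := X.aemeasurable hf
  have h1 := hL f (fun x => |f x|) hf ((measurable_abs.comp_aemeasurable hmeas))
    (Filter.Eventually.of_forall fun x => by simp)
  have h2 := hL (fun x => |f x|) f h1.1 hmeas
    (Filter.Eventually.of_forall fun x => by simp)
  exact ⟨h1.1, le_antisymm h1.2 h2.2⟩

lemma LLle_dualNorm {h g : Rn n → ℝ} (hh : h ∈ X.carrier) :
    ∫⁻ x, ENNReal.ofReal |h x * g x| ≤
      ENNReal.ofReal (X.norm h) * kotheDualNorm X.carrier X.norm g := by
  rcases eq_or_lt_of_le (X.norm_nonneg h) with h0 | hpos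
  · have hz : h =ᵐ[volume] 0 := X.norm_eq_zero hh h0.symm
    have hz' : (fun x => ENNReal.ofReal |h x * g x|) =ᵐ[volume] (fun _ => 0) := by
      filter_upwards [hz] with x hx
      simp only [Pi.zero_apply] at hx
      simp [hx]
    rw [lintegral_congr_ae hz', lintegral_zero]
    exact zero_le
  · set c := X.norm h with hc
    have hc0 : c ≠ 0 := ne_of_gt hpos
    have hmem' : c⁻¹ • h ∈ X.carrier := X.smul_mem _ hh
    have hnorm' : X.norm (c⁻¹ • h) ≤ 1 := by
      rw [X.norm_smul, abs_of_nonneg (inv_nonneg.2 hpos.le)]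
      exact le_of_eq (inv_mul_cancel₀ hc0)
    have hle : ∫⁻ x, ENNReal.ofReal |(c⁻¹ • h) x * g x| ≤ kotheDualNorm X.carrier X.norm g :=
      le_iSup₂_of_le (c⁻¹ • h) ⟨hmem', hnorm'⟩ le_rfl
    calc ∫⁻ x, ENNReal.ofReal |h x * g x|
        = ∫⁻ x, ENNReal.ofReal c * ENNReal.ofReal |(c⁻¹ • h) x * g x| := by
          refine lintegral_congr fun x => ?_
          rw [← ENNReal.ofReal_mul hpos.le]
          congr 1
          have hxx : (c⁻¹ • h) x * g x = c⁻¹ * (h x * g x) := by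
            simp only [Pi.smul_apply, smul_eq_mul]; ring
          rw [hxx, abs_mul c⁻¹ (h x * g x), abs_of_nonneg (inv_nonneg.2 hpos.le), ← mul_assoc,
            mul_inv_cancel₀ hc0, one_mul]
      _ = ENNReal.ofReal c * ∫⁻ x, ENNReal.ofReal |(c⁻¹ • h) x * g x| :=
          lintegral_const_mul' _ _ ENNReal.ofReal_ne_top
      _ ≤ ENNReal.ofReal c * kotheDualNorm X.carrier X.norm g := mul_le_mul_right hle _

lemma LLofReal_ciSup {a : ℕ → ℝ} (hb : BddAbove (Set.range a)) :
    ENNReal.ofReal (⨆ k, a k) = ⨆ k, ENNReal.ofReal (a k) :=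
  Monotone.map_ciSup_of_continuousAt (ENNReal.continuous_ofReal.continuousAt)
    (fun _ _ h => ENNReal.ofReal_le_ofReal h) hb

lemma LLiSup_ofReal_tendsto {a : ℕ → ℝ} {L : ℝ} (hm : Monotone a)
    (ht : Filter.Tendsto a Filter.atTop (nhds L)) :
    (⨆ k, ENNReal.ofReal (a k)) = ENNReal.ofReal L := by
  have hmono : Monotone fun k => ENNReal.ofReal (a k) :=
    fun i j h => ENNReal.ofReal_le_ofReal (hm h)
  have h1 := tendsto_atTop_iSup hmono
  have h2 : Filter.Tendsto (fun k => ENNReal.ofReal (a k)) Filter.atTop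
      (nhds (ENNReal.ofReal L)) := (ENNReal.continuous_ofReal.continuousAt).tendsto.comp ht
  exact tendsto_nhds_unique h1 h2

lemma LLsum_mem (T : ℕ → Rn n → ℝ) (s : Finset ℕ) (h : ∀ j ∈ s, T j ∈ X.carrier) :
    (∑ j ∈ s, T j) ∈ X.carrier ∧ X.norm (∑ j ∈ s, T j) ≤ ∑ j ∈ s, X.norm (T j) := by
  classical
  induction s using Finset.induction with
  | empty => simp only [Finset.sum_empty]; exact ⟨X.zero_mem, le_of_eq X.norm_zero⟩
  | @insert a s ha ih =>
    simp only [Finset.sum_insert ha]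
    have h1 := h a (Finset.mem_insert_self a s)
    have ih' := ih (fun j hj => h j (Finset.mem_insert_of_mem hj))
    exact ⟨X.add_mem h1 ih'.1,
      le_trans (X.norm_add_le h1 ih'.1) (add_le_add_right ih'.2 _)⟩

lemma LLiInf_shift (u : ℕ → ℝ≥0∞) (m : ℕ) :
    (⨅ i, u (m + i)) = ⨅ i, ⨅ (_ : i ≥ m), u i := by
  apply le_antisymm
  · refine le_iInf fun i => le_iInf fun hi => ?_
    have hh : m + (i - m) = i := by omega
    exact (iInf_le _ (i - m)).trans_eq (by rw [hh])
  · exact le_iInf fun i => iInf₂_le (m + i) (Nat.le_add_right m i)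

end LLaux
section LLaux2

open Set

variable {n : ℕ} {X : BanachInL0 n}

lemma LLclosed_ball (hL : X.PropL) (hF : X.PropF) {C : ℝ} {h : Rn n → ℝ}
    (hmeas : AEMeasurable h volume) {H : ℕ → Rn n → ℝ} (hmem : ∀ j, H j ∈ X.carrier)
    (hnorm : ∀ j, X.norm (H j) ≤ C)
    (hae : ∀ᵐ x ∂volume, Tendsto (fun j => H j x) atTop (nhds (h x))) :
    h ∈ X.carrier ∧ X.norm h ≤ C := by
  set Hm : ℕ → Rn n → ℝ := fun j => (X.aemeasurable (hmem j)).mk (H j) with hHm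
  have hHmmeas : ∀ j, Measurable (Hm j) := fun j => (X.aemeasurable (hmem j)).measurable_mk
  have hHe : ∀ j, H j =ᵐ[volume] Hm j := fun j => (X.aemeasurable (hmem j)).ae_eq_mk
  set G : ℕ → Rn n → ℝ≥0∞ := fun j x => ⨅ i, ENNReal.ofReal |Hm (j + i) x| with hG
  have hGmeas : ∀ j, Measurable (G j) := fun j =>
    Measurable.iInf fun i => ENNReal.measurable_ofReal.comp (hHmmeas _).abs
  have hGle : ∀ j x, G j x ≤ ENNReal.ofReal |Hm j x| := fun j x => by
    simpa using iInf_le (fun i => ENNReal.ofReal |Hm (j + i) x|) 0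
  have hGne : ∀ j x, G j x ≠ ∞ := fun j x => ((hGle j x).trans_lt ENNReal.ofReal_lt_top).ne
  set g : ℕ → Rn n → ℝ := fun j x => (G j x).toReal with hg
  have hgmeas : ∀ j, Measurable (g j) := fun j => (hGmeas j).ennreal_toReal
  have hgnonneg : ∀ j x, 0 ≤ g j x := fun j x => ENNReal.toReal_nonneg
  have hgle : ∀ j x, g j x ≤ |Hm j x| := fun j x => by
    have h2 := ENNReal.toReal_mono ENNReal.ofReal_ne_top (hGle j x)
    rwa [ENNReal.toReal_ofReal (abs_nonneg _)] at h2
  have hGmono : ∀ x, Monotone fun j => G j x := by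
    intro x j k hjk
    refine le_iInf fun i => ?_
    have hh : j + (k - j + i) = k + i := by omega
    exact (iInf_le _ (k - j + i)).trans_eq (by rw [hh])
  have hgmono : ∀ x, Monotone fun j => g j x := fun x j k hjk =>
    ENNReal.toReal_mono (hGne k x) (hGmono x hjk)
  have hgmem : ∀ j, g j ∈ X.carrier ∧ X.norm (g j) ≤ X.norm (H j) := by
    intro j
    refine hL (H j) (g j) (hmem j) (hgmeas j).aemeasurable ?_
    filter_upwards [hHe j] with x hx
    rw [abs_of_nonneg (hgnonneg j x), hx]
    exact hgle j x
  have htend : ∀ᵐ x ∂volume, Tendsto (fun j => g j x) atTop (nhds |h x|) := by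
    have hall : ∀ᵐ x ∂volume, (∀ j, H j x = Hm j x) := ae_all_iff.2 fun j => hHe j
    filter_upwards [hall, hae] with x hx htx
    have hu : Tendsto (fun i => ENNReal.ofReal |Hm i x|) atTop (nhds (ENNReal.ofReal |h x|)) := by
      have h1 : Tendsto (fun i => |H i x|) atTop (nhds |h x|) := htx.abs
      have h2 := (ENNReal.continuous_ofReal.continuousAt).tendsto.comp h1
      simp only [Function.comp_def] at h2
      simpa only [hx] using h2
    have hliminf : Filter.liminf (fun i => ENNReal.ofReal |Hm i x|) atTop
        = ENNReal.ofReal |h x| := hu.liminf_eq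
    have hsup : (⨆ j, G j x) = ENNReal.ofReal |h x| := by
      rw [← hliminf, Filter.liminf_eq_iSup_iInf_of_nat]
      exact iSup_congr fun j => LLiInf_shift (fun i => ENNReal.ofReal |Hm i x|) j
    have hGt : Tendsto (fun j => G j x) atTop (nhds (ENNReal.ofReal |h x|)) := by
      rw [← hsup]; exact tendsto_atTop_iSup (hGmono x)
    have h3 := (ENNReal.tendsto_toReal (show ENNReal.ofReal |h x| ≠ ⊤ from ENNReal.ofReal_ne_top)).comp hGt
    simp only [Function.comp_def] at h3
    rwa [ENNReal.toReal_ofReal (abs_nonneg _)] at h3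
  have hFat := hF g (fun x => |h x|) (fun j => (hgmem j).1)
    (measurable_abs.comp_aemeasurable hmeas)
    (by filter_upwards [htend] with x hx
        exact ⟨fun k => hgnonneg k x, hgmono x, hx⟩)
    ⟨C, by rintro _ ⟨j, rfl⟩; exact (hgmem j).2.trans (hnorm j)⟩
  have h2 := hL (fun x => |h x|) h hFat.1 hmeas (Filter.Eventually.of_forall fun x => by simp)
  refine ⟨h2.1, h2.2.trans ?_⟩
  rw [hFat.2]
  exact ciSup_le fun j => (hgmem j).2.trans (hnorm j)

lemma LLindicator_union (hL : X.PropL) {A B : Set (Rn n)} (hA : MeasurableSet A)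
    (hB : MeasurableSet B)
    (hAmem : A.indicator (fun _ => (1:ℝ)) ∈ X.carrier)
    (hBmem : B.indicator (fun _ => (1:ℝ)) ∈ X.carrier) :
    (A ∪ B).indicator (fun _ => (1:ℝ)) ∈ X.carrier := by
  have hadd := X.add_mem hAmem hBmem
  refine (hL _ _ hadd ((measurable_const.indicator (hA.union hB)).aemeasurable) ?_).1
  refine Filter.Eventually.of_forall fun x => ?_
  simp only [Pi.add_apply]
  by_cases h1 : x ∈ A <;> by_cases h2 : x ∈ B <;>
    simp [Set.indicator_of_mem, Set.indicator_of_notMem, h1, h2, Set.mem_union, abs_of_nonneg]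

end LLaux2
section LLaux3

open Set

variable {n : ℕ} {X : BanachInL0 n}

lemma LLexhaustion (hL : X.PropL) (hSa : X.PropSa) :
    ∃ D : ℕ → Set (Rn n), (∀ k, MeasurableSet (D k)) ∧ (∀ k, D k ⊆ D (k+1)) ∧
      (∀ k, (D k).indicator (fun _ => (1:ℝ)) ∈ X.carrier) ∧
      volume (⋃ k, D k)ᶜ = 0 := by
  classical
  set P : Set (Rn n) → Prop :=
    fun F => MeasurableSet F ∧ F.indicator (fun _ => (1:ℝ)) ∈ X.carrier with hP
  set B : ℕ → Set (Rn n) := fun m => Metric.ball (0 : Rn n) (m+1) with hB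
  have hBmeas : ∀ m, MeasurableSet (B m) := fun m => measurableSet_ball
  have hBfin : ∀ m, volume (B m) < ∞ := fun m => measure_ball_lt_top
  have hBpos : ∀ m, 0 < volume (B m) := fun m => Metric.measure_ball_pos _ _ (by positivity)
  set s : ℕ → ℝ≥0∞ := fun m => ⨆ (F : Set (Rn n)) (_ : P F ∧ F ⊆ B m), volume F with hs
  have hsle : ∀ m, s m ≤ volume (B m) := fun m => iSup₂_le fun F hF => measure_mono hF.2
  have hsne : ∀ m, s m ≠ ∞ := fun m => ((hsle m).trans_lt (hBfin m)).ne
  have hspos : ∀ m, 0 < s m := by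
    intro m
    obtain ⟨F, hFmeas, hFsub, hFpos, hFmem⟩ := hSa (B m) (hBmeas m) (hBpos m)
    exact hFpos.trans_le (le_iSup₂_of_le F ⟨⟨hFmeas, hFmem⟩, hFsub⟩ le_rfl)
  have hchoice : ∀ (m i : ℕ), ∃ F : Set (Rn n),
      (P F ∧ F ⊆ B m) ∧ s m - ((i:ℝ≥0∞)+1)⁻¹ < volume F := by
    intro m i
    have hlt : s m - ((i:ℝ≥0∞)+1)⁻¹ < s m := by
      apply ENNReal.sub_lt_self (hsne m) (hspos m).ne'
      simp
    obtain ⟨F, hF⟩ := lt_iSup_iff.mp hlt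
    obtain ⟨hPF, hlt2⟩ := lt_iSup_iff.mp hF
    exact ⟨F, hPF, hlt2⟩
  choose A hA1 hA2 using hchoice
  have hnull : ∀ m, volume (B m \ ⋃ i, A m i) = 0 := by
    intro m
    by_contra hpos0
    have hpos' : 0 < volume (B m \ ⋃ i, A m i) := pos_iff_ne_zero.mpr hpos0
    have hmeas' : MeasurableSet (B m \ ⋃ i, A m i) :=
      (hBmeas m).diff (MeasurableSet.iUnion fun i => (hA1 m i).1.1)
    obtain ⟨H, hHmeas, hHsub, hHpos, hHmem⟩ := hSa _ hmeas' hpos'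
    obtain ⟨i, hi⟩ := ENNReal.exists_inv_nat_lt hHpos.ne'
    have hi' : ((i:ℝ≥0∞)+1)⁻¹ < volume H :=
      lt_of_le_of_lt (ENNReal.inv_le_inv.2 (le_add_of_nonneg_right zero_le_one)) hi
    have hdisj : Disjoint (A m i) H := by
      refine Set.disjoint_left.mpr fun x hx hxH => ?_
      exact (hHsub hxH).2 (Set.mem_iUnion.2 ⟨i, hx⟩)
    have hF'P : (P (A m i ∪ H)) ∧ (A m i ∪ H) ⊆ B m := by
      refine ⟨⟨(hA1 m i).1.1.union hHmeas,
        LLindicator_union hL (hA1 m i).1.1 hHmeas (hA1 m i).1.2 hHmem⟩, ?_⟩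
      exact Set.union_subset (hA1 m i).2 (hHsub.trans Set.diff_subset)
    have hvol : volume (A m i ∪ H) = volume (A m i) + volume H := measure_union hdisj hHmeas
    have hgt : s m < volume (A m i ∪ H) := by
      rw [hvol]
      calc s m ≤ (s m - ((i:ℝ≥0∞)+1)⁻¹) + ((i:ℝ≥0∞)+1)⁻¹ := le_tsub_add
        _ < volume (A m i) + volume H := ENNReal.add_lt_add (hA2 m i) hi'
    have hle2 : volume (A m i ∪ H) ≤ s m := by
      show volume _ ≤ ⨆ (F : Set (Rn n)) (_ : P F ∧ F ⊆ B m), volume F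
      exact le_iSup₂_of_le (A m i ∪ H) hF'P le_rfl
    exact absurd hle2 (not_le.2 hgt)
  set e : ℕ → ℕ × ℕ := fun k => (Denumerable.eqv (ℕ × ℕ)).symm k with he
  set A' : ℕ → Set (Rn n) := fun k => A (e k).1 (e k).2 with hA'
  set D : ℕ → Set (Rn n) := fun k => ⋃ j ∈ Finset.range (k+1), A' j with hD
  have hA'meas : ∀ k, MeasurableSet (A' k) := fun k => (hA1 _ _).1.1
  have hA'mem : ∀ k, (A' k).indicator (fun _ => (1:ℝ)) ∈ X.carrier := fun k => (hA1 _ _).1.2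
  have hDmeas : ∀ k, MeasurableSet (D k) := fun k =>
    Finset.measurableSet_biUnion _ fun j _ => hA'meas j
  have hDsucc : ∀ k, D (k+1) = A' (k+1) ∪ D k := by
    intro k
    simp only [hD, Finset.range_add_one (n := k+1)]
    rw [Finset.set_biUnion_insert]
  have hDmono : ∀ k, D k ⊆ D (k+1) := by
    intro k
    rw [hDsucc k]
    exact Set.subset_union_right
  have hDmem : ∀ k, (D k).indicator (fun _ => (1:ℝ)) ∈ X.carrier := by
    intro k
    induction k with
    | zero => simpa [hD] using hA'mem 0
    | succ k ih =>
      rw [hDsucc k]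
      exact LLindicator_union hL (hA'meas (k+1)) (hDmeas k) (hA'mem (k+1)) ih
  refine ⟨D, hDmeas, hDmono, hDmem, ?_⟩
  have hcover : (⋃ k, D k)ᶜ ⊆ ⋃ m, (B m \ ⋃ i, A m i) := by
    intro x hx
    simp only [Set.mem_compl_iff, Set.mem_iUnion, not_exists] at hx
    obtain ⟨m, hm⟩ : ∃ m : ℕ, x ∈ B m := by
      obtain ⟨m, hm⟩ := exists_nat_gt ‖x‖
      refine ⟨m, ?_⟩
      simp only [hB, Metric.mem_ball, dist_zero_right]
      linarith
    refine Set.mem_iUnion.2 ⟨m, hm, fun hxA => ?_⟩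
    obtain ⟨i, hxi⟩ := Set.mem_iUnion.1 hxA
    set k := (Denumerable.eqv (ℕ × ℕ)) (m, i) with hk
    have hek : e k = (m, i) := by simp [he, hk]
    have hxA' : x ∈ A' k := by
      show x ∈ A (e k).1 (e k).2
      rw [hek]
      exact hxi
    exact hx k (Set.mem_biUnion (Finset.self_mem_range_succ k) hxA')
  exact measure_mono_null hcover (measure_iUnion_null hnull)

end LLaux3
section LLaux4

open Set

variable {n : ℕ} {X : BanachInL0 n}

lemma LLhalf_pow_mul (J : ℕ) : ((2:ℝ≥0∞)⁻¹)^J * ((J:ℝ≥0∞) * 2^J) = (J:ℝ≥0∞) := by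
  rw [mul_comm ((J:ℝ≥0∞)) _, ← mul_assoc, ← mul_pow,
    ENNReal.inv_mul_cancel (by norm_num) (by norm_num), one_pow, one_mul]

lemma LLofReal_half_pow (J : ℕ) : ENNReal.ofReal ((2⁻¹:ℝ)^J) = ((2:ℝ≥0∞)⁻¹)^J := by
  rw [ENNReal.ofReal_pow (by norm_num), ENNReal.ofReal_inv_of_pos (by norm_num),
    ENNReal.ofReal_ofNat]

lemma LLdualNorm_lt_top (hL : X.PropL) {g : Rn n → ℝ} (hg : g ∈ kotheDual X.carrier) :
    kotheDualNorm X.carrier X.norm g < ⊤ := by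
  by_contra htop
  have htop' : kotheDualNorm X.carrier X.norm g = ⊤ := by
    simpa [lt_top_iff_ne_top] using htop
  have hchoice : ∀ j : ℕ, ∃ f : Rn n → ℝ, (f ∈ X.carrier ∧ X.norm f ≤ 1) ∧
      ((j:ℝ≥0∞) * 2^j) < ∫⁻ x, ENNReal.ofReal |f x * g x| := by
    intro j
    have hlt : ((j:ℝ≥0∞) * 2^j) < kotheDualNorm X.carrier X.norm g := by
      rw [htop']
      exact ENNReal.mul_lt_top (ENNReal.natCast_lt_top j) (ENNReal.pow_lt_top (by norm_num))
    obtain ⟨f, hf⟩ := lt_iSup_iff.mp hlt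
    obtain ⟨hPf, hlt2⟩ := lt_iSup_iff.mp hf
    exact ⟨f, hPf, hlt2⟩
  choose f hf1 hf2 using hchoice
  have habs : ∀ j, (fun x => |f j x|) ∈ X.carrier ∧
      X.norm (fun x => |f j x|) = X.norm (f j) := fun j => LLabs_mem hL (hf1 j).1
  set T : ℕ → Rn n → ℝ := fun j x => (2⁻¹:ℝ)^j * |f j x| with hT
  have hTmem : ∀ j, T j ∈ X.carrier := fun j => X.smul_mem ((2⁻¹:ℝ)^j) (habs j).1
  have hTnorm : ∀ j, X.norm (T j) ≤ (2⁻¹:ℝ)^j := by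
    intro j
    have hns : X.norm (T j) = |(2⁻¹:ℝ)^j| * X.norm (fun x => |f j x|) :=
      X.norm_smul ((2⁻¹:ℝ)^j) (fun x => |f j x|)
    calc X.norm (T j) = |(2⁻¹:ℝ)^j| * X.norm (fun x => |f j x|) := hns
      _ = (2⁻¹:ℝ)^j * X.norm (f j) := by rw [abs_of_nonneg (by positivity), (habs j).2]
      _ ≤ (2⁻¹:ℝ)^j * 1 := by
          have := (hf1 j).2
          gcongr
      _ = (2⁻¹:ℝ)^j := mul_one _
  set S : ℕ → Rn n → ℝ := fun J => ∑ j ∈ Finset.range (J+1), T j with hS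
  have hSmem : ∀ J, S J ∈ X.carrier := fun J => (LLsum_mem T _ (fun j _ => hTmem j)).1
  have hTnonneg : ∀ j x, 0 ≤ T j x := fun j x => by positivity
  have hdiff : ∀ L J, L ≤ J → X.norm (S J - S L) ≤ (2⁻¹:ℝ)^L := by
    intro L J hLJ
    have key := Finset.sum_Ico_consecutive T (Nat.zero_le (L+1)) (by omega : L+1 ≤ J+1)
    have hS3 : S J - S L = ∑ j ∈ Finset.Ico (L+1) (J+1), T j := by
      simp only [hS, Finset.range_eq_Ico]
      rw [← key]
      abel
    have hmid := LLsum_mem T (Finset.Ico (L+1) (J+1)) (fun j _ => hTmem j)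
    have hnorm2 : X.norm (∑ j ∈ Finset.Ico (L+1) (J+1), T j)
        ≤ ∑ j ∈ Finset.Ico (L+1) (J+1), (2⁻¹:ℝ)^j :=
      hmid.2.trans (Finset.sum_le_sum fun j _ => hTnorm j)
    have hgeo : ∑ j ∈ Finset.Ico (L+1) (J+1), (2⁻¹:ℝ)^j ≤ (2⁻¹:ℝ)^L := by
      rw [Finset.sum_Ico_eq_sum_range]
      calc ∑ k ∈ Finset.range (J+1-(L+1)), (2⁻¹:ℝ)^(L+1+k)
          = (2⁻¹:ℝ)^(L+1) * ∑ k ∈ Finset.range (J+1-(L+1)), (2⁻¹:ℝ)^k := by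
            rw [Finset.mul_sum]
            exact Finset.sum_congr rfl fun k _ => pow_add _ _ _
        _ ≤ (2⁻¹:ℝ)^(L+1) * 2 := by
            have h2 : ∑ k ∈ Finset.range (J+1-(L+1)), (2⁻¹:ℝ)^k ≤ 2 := by
              have := sum_geometric_two_le (J+1-(L+1))
              simpa [one_div] using this
            gcongr
        _ = (2⁻¹:ℝ)^L := by
            rw [pow_succ]
            ring
    rw [hS3]
    exact hnorm2.trans hgeo
  have hcauchy : ∀ ε : ℝ, 0 < ε → ∃ N, ∀ k l, N ≤ k → N ≤ l → X.norm (S k - S l) < ε := by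
    intro ε hε
    obtain ⟨N, hN⟩ := exists_pow_lt_of_lt_one hε (by norm_num : (2⁻¹:ℝ) < 1)
    refine ⟨N, fun k l hk hl => ?_⟩
    rcases le_total l k with hlk | hlk
    · exact lt_of_le_of_lt ((hdiff l k hlk).trans
        (pow_le_pow_of_le_one (by norm_num) (by norm_num) hl)) hN
    · have hneg : S k - S l = (-1:ℝ) • (S l - S k) := by funext x; simp
      rw [hneg, X.norm_smul]
      simp only [abs_neg, abs_one, one_mul]
      exact lt_of_le_of_lt ((hdiff k l hlk).trans
        (pow_le_pow_of_le_one (by norm_num) (by norm_num) hk)) hN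
  obtain ⟨h, hhmem, hhten⟩ := X.complete S hSmem hcauchy
  have hSmono : ∀ J i x, J ≤ i → S J x ≤ S i x := by
    intro J i x hJi
    simp only [hS, Finset.sum_apply]
    exact Finset.sum_le_sum_of_subset_of_nonneg
      (Finset.range_subset_range.2 (by omega)) (fun j _ _ => hTnonneg j x)
  have hsubmem : ∀ i, S i - h ∈ X.carrier := by
    intro i
    have heq : S i - h = S i + (-1:ℝ) • h := by funext x; simp [sub_eq_add_neg]
    rw [heq]
    exact X.add_mem (hSmem i) (X.smul_mem _ hhmem)
  have hSle : ∀ J, ∀ᵐ x ∂volume, S J x ≤ h x := by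
    intro J
    set t : Rn n → ℝ := fun x => max (S J x - h x) 0 with ht
    have htmeas : AEMeasurable t volume :=
      ((X.aemeasurable (hSmem J)).sub (X.aemeasurable hhmem)).max aemeasurable_const
    have hbound : ∀ i, J ≤ i → t ∈ X.carrier ∧ X.norm t ≤ X.norm (S i - h) := by
      intro i hi
      refine hL (S i - h) t (hsubmem i) htmeas (Filter.Eventually.of_forall fun x => ?_)
      have htx : |t x| = max (S J x - h x) 0 := abs_of_nonneg (le_max_right _ _)
      rw [htx]
      rcases le_total (S J x - h x) 0 with hc | hc
      · rw [max_eq_right hc]; exact abs_nonneg _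
      · rw [max_eq_left hc]
        have h5 := hSmono J i x hi
        have h6 : S J x - h x ≤ S i x - h x := by linarith
        exact h6.trans (le_abs_self _)
    have htnorm : X.norm t ≤ 0 := by
      refine ge_of_tendsto hhten ?_
      filter_upwards [Filter.eventually_ge_atTop J] with i hi
      exact (hbound i hi).2
    have htzero : t =ᵐ[volume] 0 :=
      X.norm_eq_zero (hbound J le_rfl).1 (le_antisymm htnorm (X.norm_nonneg t))
    filter_upwards [htzero] with x hx
    have hx0 : max (S J x - h x) 0 = 0 := hx
    have := le_max_left (S J x - h x) (0:ℝ)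
    rw [hx0] at this
    linarith
  have hint : Integrable (fun x => h x * g x) volume := hg.2 h hhmem
  have hfin : ∫⁻ x, ENNReal.ofReal |h x * g x| < ⊤ := by
    have h2 := hint.2
    rw [MeasureTheory.hasFiniteIntegral_iff_norm] at h2
    simpa [Real.norm_eq_abs, abs_mul] using h2
  have hlow : ∀ J : ℕ, (J:ℝ≥0∞) ≤ ∫⁻ x, ENNReal.ofReal |h x * g x| := by
    intro J
    have hae2 : ∀ᵐ x ∂volume, ((2:ℝ≥0∞)⁻¹)^J * ENNReal.ofReal |f J x * g x|
        ≤ ENNReal.ofReal |h x * g x| := by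
      filter_upwards [hSle J] with x hx
      have h1 : T J x ≤ S J x := by
        have h0 : S J x = ∑ j ∈ Finset.range (J+1), T j x := by
          simp [hS, Finset.sum_apply]
        rw [h0]
        exact Finset.single_le_sum (f := fun j => T j x)
          (fun j _ => hTnonneg j x) (Finset.self_mem_range_succ J)
      have h2 : (2⁻¹:ℝ)^J * |f J x * g x| ≤ |h x * g x| := by
        rw [abs_mul, abs_mul, ← mul_assoc]
        have h3 : (2⁻¹:ℝ)^J * |f J x| ≤ |h x| := by
          have h4 : T J x = (2⁻¹:ℝ)^J * |f J x| := by simp only [hT]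
          rw [← h4]
          exact h1.trans (hx.trans (le_abs_self _))
        exact mul_le_mul_of_nonneg_right h3 (abs_nonneg _)
      calc ((2:ℝ≥0∞)⁻¹)^J * ENNReal.ofReal |f J x * g x|
          = ENNReal.ofReal ((2⁻¹:ℝ)^J * |f J x * g x|) := by
            rw [ENNReal.ofReal_mul (by positivity), LLofReal_half_pow]
        _ ≤ ENNReal.ofReal |h x * g x| := ENNReal.ofReal_le_ofReal h2
    have hmono := lintegral_mono_ae hae2
    rw [lintegral_const_mul' _ _ (by norm_num : ((2:ℝ≥0∞)⁻¹)^J ≠ ⊤)] at hmono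
    calc (J:ℝ≥0∞) = ((2:ℝ≥0∞)⁻¹)^J * ((J:ℝ≥0∞) * 2^J) := (LLhalf_pow_mul J).symm
      _ ≤ ((2:ℝ≥0∞)⁻¹)^J * ∫⁻ x, ENNReal.ofReal |f J x * g x| := by
          gcongr
          exact (hf2 J).le
      _ ≤ ∫⁻ x, ENNReal.ofReal |h x * g x| := hmono
  have htopint : ∫⁻ x, ENNReal.ofReal |h x * g x| = ⊤ := by
    refine eq_top_iff.2 ?_
    rw [← ENNReal.iSup_natCast]
    exact iSup_le hlow
  exact absurd htopint hfin.ne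

end LLaux4
section LLaux5

open Set

variable {n : ℕ} {X : BanachInL0 n}

lemma LLdualE_lt_top (hL : X.PropL) (hSa : X.PropSa) {f : Rn n → ℝ}
    (hf : f ∈ kotheDual (kotheDual X.carrier)) :
    kotheDualNormE (kotheDual X.carrier) (kotheDualNorm X.carrier X.norm) f < ⊤ := by
  by_contra htop
  have htop' : kotheDualNormE (kotheDual X.carrier) (kotheDualNorm X.carrier X.norm) f = ⊤ := by
    simpa [lt_top_iff_ne_top] using htop
  have hchoice : ∀ j : ℕ, ∃ g : Rn n → ℝ,
      (g ∈ kotheDual X.carrier ∧ kotheDualNorm X.carrier X.norm g ≤ 1) ∧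
      ((j:ℝ≥0∞) * 2^j) < ∫⁻ x, ENNReal.ofReal |g x * f x| := by
    intro j
    have hlt : ((j:ℝ≥0∞) * 2^j)
        < kotheDualNormE (kotheDual X.carrier) (kotheDualNorm X.carrier X.norm) f := by
      rw [htop']
      exact ENNReal.mul_lt_top (ENNReal.natCast_lt_top j) (ENNReal.pow_lt_top (by norm_num))
    obtain ⟨g, hg⟩ := lt_iSup_iff.mp hlt
    obtain ⟨hPg, hlt2⟩ := lt_iSup_iff.mp hg
    exact ⟨g, hPg, hlt2⟩
  choose g hg1 hg2 using hchoice
  have hgmeas : ∀ j, AEMeasurable (fun x => ENNReal.ofReal |g j x|) volume := fun j =>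
    ENNReal.measurable_ofReal.comp_aemeasurable (measurable_abs.comp_aemeasurable (hg1 j).1.1)
  set Gh : Rn n → ℝ≥0∞ := fun x => ∑' j : ℕ, ((2:ℝ≥0∞)⁻¹)^j * ENNReal.ofReal |g j x| with hGh
  have hGmeas : AEMeasurable Gh volume := by
    apply AEMeasurable.ennreal_tsum
    intro j
    exact (hgmeas j).const_mul _
  have hkey : ∀ h : Rn n → ℝ, h ∈ X.carrier →
      ∫⁻ x, ENNReal.ofReal |h x| * Gh x ≤ 2 * ENNReal.ofReal (X.norm h) := by
    intro h hh
    have hptw : ∀ x, ENNReal.ofReal |h x| * Gh x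
        = ∑' j : ℕ, ((2:ℝ≥0∞)⁻¹)^j * (ENNReal.ofReal |h x| * ENNReal.ofReal |g j x|) := by
      intro x
      rw [hGh, ← ENNReal.tsum_mul_left]
      exact tsum_congr fun j => by ring
    have heq : ∫⁻ x, ENNReal.ofReal |h x| * Gh x
        = ∑' j : ℕ, ((2:ℝ≥0∞)⁻¹)^j
            * ∫⁻ x, ENNReal.ofReal |h x| * ENNReal.ofReal |g j x| := by
      have hhabs : AEMeasurable (fun x => ENNReal.ofReal |h x|) volume :=
        ENNReal.measurable_ofReal.comp_aemeasurable
          (measurable_abs.comp_aemeasurable (X.aemeasurable hh))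
      have hjmeas : ∀ j : ℕ, AEMeasurable
          (fun x => ((2:ℝ≥0∞)⁻¹)^j * (ENNReal.ofReal |h x| * ENNReal.ofReal |g j x|))
          volume := fun j => ((hhabs.mul (hgmeas j)).const_mul _)
      rw [lintegral_congr hptw, lintegral_tsum hjmeas]
      exact tsum_congr fun j => lintegral_const_mul' _ _ (by norm_num)
    rw [heq]
    have hb : ∀ j, ∫⁻ x, ENNReal.ofReal |h x| * ENNReal.ofReal |g j x|
        ≤ ENNReal.ofReal (X.norm h) := by
      intro j
      have hdn := LLle_dualNorm (X := X) (g := g j) hh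
      have heq2 : ∀ x, ENNReal.ofReal |h x| * ENNReal.ofReal |g j x|
          = ENNReal.ofReal |h x * g j x| := fun x => by
        rw [← ENNReal.ofReal_mul (abs_nonneg _), ← abs_mul]
      rw [lintegral_congr heq2]
      calc ∫⁻ x, ENNReal.ofReal |h x * g j x|
          ≤ ENNReal.ofReal (X.norm h) * kotheDualNorm X.carrier X.norm (g j) := hdn
        _ ≤ ENNReal.ofReal (X.norm h) * 1 := mul_le_mul_right (hg1 j).2 _
        _ = ENNReal.ofReal (X.norm h) := mul_one _
    calc ∑' j : ℕ, ((2:ℝ≥0∞)⁻¹)^j * ∫⁻ x, ENNReal.ofReal |h x| * ENNReal.ofReal |g j x|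
        ≤ ∑' j : ℕ, ((2:ℝ≥0∞)⁻¹)^j * ENNReal.ofReal (X.norm h) :=
          ENNReal.tsum_le_tsum fun j => mul_le_mul_right (hb j) _
      _ = (∑' j : ℕ, ((2:ℝ≥0∞)⁻¹)^j) * ENNReal.ofReal (X.norm h) := ENNReal.tsum_mul_right
      _ = 2 * ENNReal.ofReal (X.norm h) := by
          rw [ENNReal.tsum_geometric, ENNReal.one_sub_inv_two, inv_inv]
  obtain ⟨D, hDmeas, hDmono, hDmem, hDnull⟩ := LLexhaustion hL hSa
  have hfinae : ∀ᵐ x ∂volume, Gh x < ⊤ := by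
    have hA : ∀ k, ∀ᵐ x ∂volume, x ∈ D k → Gh x < ⊤ := by
      intro k
      have hfin2 : ∫⁻ x, ENNReal.ofReal |(D k).indicator (fun _ => (1:ℝ)) x| * Gh x < ⊤ :=
        lt_of_le_of_lt (hkey _ (hDmem k))
          (ENNReal.mul_lt_top (by norm_num) ENNReal.ofReal_lt_top)
      have hmeas3 : AEMeasurable (fun x => ENNReal.ofReal
          |(D k).indicator (fun _ => (1:ℝ)) x| * Gh x) volume :=
        ((ENNReal.measurable_ofReal.comp_aemeasurable
          (measurable_abs.comp_aemeasurable
            ((measurable_const.indicator (hDmeas k)).aemeasurable)))).mul hGmeas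
      have hael := ae_lt_top' hmeas3 hfin2.ne
      filter_upwards [hael] with x hx hxD
      rw [Set.indicator_of_mem hxD] at hx
      simpa using hx
    have hall := ae_all_iff.2 hA
    have hU : ∀ᵐ x ∂volume, x ∈ ⋃ k, D k := by
      rw [MeasureTheory.ae_iff]
      have hcompl : {a : Rn n | ¬ a ∈ ⋃ k, D k} = (⋃ k, D k)ᶜ := rfl
      rw [hcompl]
      exact hDnull
    filter_upwards [hall, hU] with x hx hxU
    obtain ⟨k, hk⟩ := Set.mem_iUnion.1 hxU
    exact hx k hk
  set gg : Rn n → ℝ := fun x => (Gh x).toReal with hgg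
  have hggmeas : AEMeasurable gg volume := hGmeas.ennreal_toReal
  have hggX' : gg ∈ kotheDual X.carrier := by
    refine ⟨hggmeas, fun h hh => ?_⟩
    have hmeas2 : AEMeasurable (fun x => h x * gg x) volume :=
      (X.aemeasurable hh).mul hggmeas
    refine ⟨hmeas2.aestronglyMeasurable, ?_⟩
    rw [MeasureTheory.hasFiniteIntegral_iff_norm]
    have heq3 : ∫⁻ x, ENNReal.ofReal ‖h x * gg x‖ = ∫⁻ x, ENNReal.ofReal |h x| * Gh x := by
      apply lintegral_congr_ae
      filter_upwards [hfinae] with x hx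
      rw [Real.norm_eq_abs, abs_mul, abs_of_nonneg ENNReal.toReal_nonneg,
        ENNReal.ofReal_mul (abs_nonneg _), ENNReal.ofReal_toReal hx.ne]
    rw [heq3]
    exact lt_of_le_of_lt (hkey h hh) (ENNReal.mul_lt_top (by norm_num) ENNReal.ofReal_lt_top)
  have hint := hf.2 gg hggX'
  have hfin3 : ∫⁻ x, ENNReal.ofReal |gg x * f x| < ⊤ := by
    have h2 := hint.2
    rw [MeasureTheory.hasFiniteIntegral_iff_norm] at h2
    simpa [Real.norm_eq_abs, abs_mul] using h2
  have hlow : ∀ j : ℕ, (j:ℝ≥0∞) ≤ ∫⁻ x, ENNReal.ofReal |gg x * f x| := by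
    intro j
    have hptlow : ∀ᵐ x ∂volume, ((2:ℝ≥0∞)⁻¹)^j * ENNReal.ofReal |g j x * f x|
        ≤ ENNReal.ofReal |gg x * f x| := by
      filter_upwards [hfinae] with x hx
      have h1 : ENNReal.ofReal |gg x * f x| = Gh x * ENNReal.ofReal |f x| := by
        rw [abs_mul, ENNReal.ofReal_mul (abs_nonneg _),
          abs_of_nonneg ENNReal.toReal_nonneg, ENNReal.ofReal_toReal hx.ne]
      have h2 : ((2:ℝ≥0∞)⁻¹)^j * ENNReal.ofReal |g j x| ≤ Gh x := ENNReal.le_tsum j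
      calc ((2:ℝ≥0∞)⁻¹)^j * ENNReal.ofReal |g j x * f x|
          = (((2:ℝ≥0∞)⁻¹)^j * ENNReal.ofReal |g j x|) * ENNReal.ofReal |f x| := by
            rw [abs_mul, ENNReal.ofReal_mul (abs_nonneg _), mul_assoc]
        _ ≤ Gh x * ENNReal.ofReal |f x| := mul_le_mul_left h2 _
        _ = ENNReal.ofReal |gg x * f x| := h1.symm
    have hm := lintegral_mono_ae hptlow
    rw [lintegral_const_mul' _ _ (by norm_num : ((2:ℝ≥0∞)⁻¹)^j ≠ ⊤)] at hm
    calc (j:ℝ≥0∞) = ((2:ℝ≥0∞)⁻¹)^j * ((j:ℝ≥0∞) * 2^j) := (LLhalf_pow_mul j).symm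
      _ ≤ ((2:ℝ≥0∞)⁻¹)^j * ∫⁻ x, ENNReal.ofReal |g j x * f x| := by
          gcongr
          exact (hg2 j).le
      _ ≤ ∫⁻ x, ENNReal.ofReal |gg x * f x| := hm
  have htopint : ∫⁻ x, ENNReal.ofReal |gg x * f x| = ⊤ := by
    refine eq_top_iff.2 ?_
    rw [← ENNReal.iSup_natCast]
    exact iSup_le hlow
  exact absurd htopint hfin3.ne

end LLaux5
section LLaux6

open Set

variable {n : ℕ} {X : BanachInL0 n}

set_option synthInstance.maxHeartbeats 1000000 in
set_option maxHeartbeats 2000000 in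
lemma LLnorming (hL : X.PropL) (hF : X.PropF) {f : Rn n → ℝ} (hf : f ∈ X.carrier)
    (hf1 : 1 < X.norm f) :
    ∃ g : Rn n → ℝ, (g ∈ kotheDual X.carrier ∧ kotheDualNorm X.carrier X.norm g ≤ 1) ∧
      (1:ℝ≥0∞) ≤ ∫⁻ x, ENNReal.ofReal |f x * g x| := by
  classical
  have hfmeas := X.aemeasurable hf
  set B : ℕ → Set (Rn n) := fun m => Metric.ball (0:Rn n) (m+1) with hB
  set fm : ℕ → Rn n → ℝ := fun m => (B m).indicator (fun y => min |f y| m) with hfm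
  have hfm_meas : ∀ m, AEMeasurable (fm m) volume := fun m =>
    ((measurable_abs.comp_aemeasurable hfmeas).min aemeasurable_const).indicator
      measurableSet_ball
  have hfm_nonneg : ∀ m x, 0 ≤ fm m x := by
    intro m x
    exact Set.indicator_nonneg (fun y _ => le_min (abs_nonneg _) (Nat.cast_nonneg m)) x
  have hfm_le : ∀ m x, fm m x ≤ |f x| := by
    intro m x
    by_cases hx : x ∈ B m
    · simp only [hfm]; rw [Set.indicator_of_mem hx]; exact min_le_left _ _
    · simp only [hfm]; rw [Set.indicator_of_notMem hx]; exact abs_nonneg _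
  have hfm_mem : ∀ m, fm m ∈ X.carrier ∧ X.norm (fm m) ≤ X.norm f := by
    intro m
    refine hL f (fm m) hf (hfm_meas m) (Filter.Eventually.of_forall fun x => ?_)
    rw [abs_of_nonneg (hfm_nonneg m x)]
    exact hfm_le m x
  have hfm_mono : ∀ x, Monotone fun m => fm m x := by
    intro x m m' hmm'
    simp only [hfm]
    by_cases hx : x ∈ B m
    · have hsub : B m ⊆ B m' := Metric.ball_subset_ball
        (by have : (m:ℝ) ≤ m' := Nat.cast_le.2 hmm'; linarith)
      rw [Set.indicator_of_mem hx, Set.indicator_of_mem (hsub hx)]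
      exact min_le_min le_rfl (Nat.cast_le.2 hmm')
    · rw [Set.indicator_of_notMem hx]
      exact Set.indicator_nonneg (fun y _ => le_min (abs_nonneg _) (Nat.cast_nonneg m')) x
  have hfm_tendsto : ∀ x, Tendsto (fun m => fm m x) atTop (nhds |f x|) := by
    intro x
    obtain ⟨M, hM⟩ := exists_nat_gt (max ‖x‖ |f x|)
    refine tendsto_atTop_of_eventually_const (i₀ := M) fun i hi => ?_
    have hMi : (M:ℝ) ≤ i := Nat.cast_le.2 hi
    have hxB : x ∈ B i := by
      simp only [hB, Metric.mem_ball, dist_zero_right]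
      have := le_max_left ‖x‖ |f x|
      linarith
    simp only [hfm]
    rw [Set.indicator_of_mem hxB]
    refine min_eq_left ?_
    have := le_max_right ‖x‖ |f x|
    linarith
  have habs := LLabs_mem hL hf
  have hbdd : BddAbove (Set.range fun m => X.norm (fm m)) :=
    ⟨X.norm f, by rintro _ ⟨m, rfl⟩; exact (hfm_mem m).2⟩
  have hFat := hF fm (fun x => |f x|) (fun m => (hfm_mem m).1)
    (measurable_abs.comp_aemeasurable hfmeas)
    (Filter.Eventually.of_forall fun x => ⟨fun m => hfm_nonneg m x, hfm_mono x, hfm_tendsto x⟩)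
    hbdd
  have hsup : 1 < ⨆ m, X.norm (fm m) := by rw [← hFat.2, habs.2]; exact hf1
  obtain ⟨m, hm1⟩ := (lt_ciSup_iff hbdd).mp hsup
  haveI : Fact ((1:ℝ≥0∞) ≤ 2) := ⟨one_le_two⟩
  have hφb : ∀ x, |fm m x| ≤ ‖(B m).indicator (fun _ => (m:ℝ)) x‖ := by
    intro x
    rw [Real.norm_eq_abs, abs_of_nonneg (hfm_nonneg m x)]
    by_cases hx : x ∈ B m
    · have e1 : fm m x = min |f x| m := by
        simp only [hfm]; rw [Set.indicator_of_mem hx]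
      have e2 : (B m).indicator (fun _ => (m:ℝ)) x = (m:ℝ) := Set.indicator_of_mem hx _
      rw [e1, e2]
      exact (min_le_right _ _).trans (le_abs_self _)
    · have e1 : fm m x = 0 := by
        simp only [hfm]; rw [Set.indicator_of_notMem hx]
      rw [e1]
      exact abs_nonneg _
  have hφ2 : MemLp (fm m) 2 volume := MemLp.of_le
    (memLp_indicator_const 2 measurableSet_ball (m:ℝ) (Or.inr measure_ball_lt_top.ne))
    ((hfm_meas m).aestronglyMeasurable)
    (Filter.Eventually.of_forall fun x => by rw [Real.norm_eq_abs]; exact hφb x)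
  set u₀ : Lp ℝ 2 (volume : Measure (Rn n)) := hφ2.toLp (fm m) with hu₀
  set K : Set (Lp ℝ 2 (volume : Measure (Rn n))) :=
    {u | ∃ h : Rn n → ℝ, h ∈ X.carrier ∧ X.norm h ≤ 1 ∧
      (∀ x, x ∉ B m → h x = 0) ∧ (↑↑u : Rn n → ℝ) =ᵐ[volume] h} with hK
  have hKconv : Convex ℝ K := by
    intro u hu v hv a b ha hb hab
    obtain ⟨h₁, hm₁, hn₁, hs₁, he₁⟩ := hu
    obtain ⟨h₂, hm₂, hn₂, hs₂, he₂⟩ := hv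
    refine ⟨a • h₁ + b • h₂, X.add_mem (X.smul_mem _ hm₁) (X.smul_mem _ hm₂), ?_, ?_, ?_⟩
    · calc X.norm (a • h₁ + b • h₂) ≤ X.norm (a • h₁) + X.norm (b • h₂) :=
          X.norm_add_le (X.smul_mem _ hm₁) (X.smul_mem _ hm₂)
        _ = |a| * X.norm h₁ + |b| * X.norm h₂ := by rw [X.norm_smul, X.norm_smul]
        _ ≤ a * 1 + b * 1 := by
            rw [abs_of_nonneg ha, abs_of_nonneg hb]
            exact add_le_add (mul_le_mul_of_nonneg_left hn₁ ha)
              (mul_le_mul_of_nonneg_left hn₂ hb)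
        _ = 1 := by rw [mul_one, mul_one]; exact hab
    · intro x hx
      simp only [Pi.add_apply, Pi.smul_apply, smul_eq_mul, hs₁ x hx, hs₂ x hx,
        mul_zero, add_zero]
    · have h1 := Lp.coeFn_add (a • u) (b • v)
      have h2 := Lp.coeFn_smul a u
      have h3 := Lp.coeFn_smul b v
      filter_upwards [h1, h2, h3, he₁, he₂] with x hx1 hx2 hx3 hxe1 hxe2
      rw [hx1]
      simp only [Pi.add_apply]
      rw [hx2, hx3]
      simp only [Pi.smul_apply, smul_eq_mul]
      rw [hxe1, hxe2]
  have h0K : (0 : Lp ℝ 2 (volume : Measure (Rn n))) ∈ K :=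
    ⟨0, X.zero_mem, by rw [X.norm_zero]; exact zero_le_one, fun x _ => rfl,
      Lp.coeFn_zero ℝ 2 volume⟩
  have hu₀K : u₀ ∉ closure K := by
    intro hc
    obtain ⟨useq, huseq, hulim⟩ := mem_closure_iff_seq_limit.mp hc
    have hnormt : Tendsto (fun j => ‖useq j - u₀‖) atTop (nhds 0) :=
      tendsto_iff_norm_sub_tendsto_zero.mp hulim
    have heq : ∀ j, eLpNorm ((↑↑(useq j) : Rn n → ℝ) - ↑↑u₀) 2 volume
        = ENNReal.ofReal ‖useq j - u₀‖ := by
      intro j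
      rw [eLpNorm_congr_ae (Lp.coeFn_sub (useq j) u₀).symm, Lp.norm_def,
        ENNReal.ofReal_toReal (Lp.eLpNorm_ne_top _)]
    have help : Tendsto (fun j => eLpNorm ((↑↑(useq j) : Rn n → ℝ) - ↑↑u₀) 2 volume)
        atTop (nhds 0) := by
      refine Tendsto.congr (fun j => (heq j).symm) ?_
      have := (ENNReal.continuous_ofReal.tendsto 0).comp hnormt
      simpa [Function.comp_def] using this
    have htim := tendstoInMeasure_of_tendsto_eLpNorm (p := (2:ℝ≥0∞)) (by norm_num)
      (fun j => Lp.aestronglyMeasurable (useq j)) (Lp.aestronglyMeasurable u₀) help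
    obtain ⟨ns, hns, haeconv⟩ := htim.exists_seq_tendsto_ae
    choose hfun hmem1 hnorm1 hsupp1 hae1 using fun j => (huseq j)
    have hae2 : ∀ᵐ x ∂volume, Tendsto (fun i => hfun (ns i) x) atTop (nhds (fm m x)) := by
      have hcoe : ∀ᵐ x ∂volume, ∀ i : ℕ, (↑↑(useq (ns i)) : Rn n → ℝ) x = hfun (ns i) x :=
        ae_all_iff.2 fun i => hae1 (ns i)
      filter_upwards [haeconv, hcoe, hφ2.coeFn_toLp] with x hx hx2 hx3
      rw [← hx3]
      exact hx.congr fun i => hx2 i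
    have hclosed := LLclosed_ball hL hF (C := 1) (hfm_meas m)
      (fun i => hmem1 (ns i)) (fun i => hnorm1 (ns i)) hae2
    exact absurd hclosed.2 (not_le.2 hm1)
  obtain ⟨Φ, c, hKlt, hcΦ⟩ := geometric_hahn_banach_closed_point
    (hKconv.closure) isClosed_closure hu₀K
  set G : Lp ℝ 2 (volume : Measure (Rn n)) := (InnerProductSpace.toDual ℝ _).symm Φ with hG
  have hGapp : ∀ v, Φ v = inner ℝ G v := fun v => (InnerProductSpace.toDual_symm_apply).symm
  have hcpos : 0 < c := by
    have := hKlt 0 (subset_closure h0K)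
    simpa using this
  have hGmeas : AEMeasurable (↑↑G : Rn n → ℝ) volume := (Lp.aestronglyMeasurable G).aemeasurable
  set G' : Rn n → ℝ := hGmeas.mk _ with hG'
  have hG'meas : Measurable G' := hGmeas.measurable_mk
  have hGG' : (↑↑G : Rn n → ℝ) =ᵐ[volume] G' := hGmeas.ae_eq_mk
  have hG2 : MemLp G' 2 volume := (Lp.memLp G).ae_eq hGG'
  have hG'int : IntegrableOn G' (B m) volume := by
    have h1 : MemLp G' 2 (volume.restrict (B m)) := hG2.restrict _
    haveI : IsFiniteMeasure (volume.restrict (B m)) :=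
      ⟨by rw [Measure.restrict_apply_univ]; exact measure_ball_lt_top⟩
    exact memLp_one_iff_integrable.mp (h1.mono_exponent one_le_two)
  have hinner : ∀ v : Lp ℝ 2 (volume : Measure (Rn n)),
      Φ v = ∫ x, (↑↑G : Rn n → ℝ) x * (↑↑v : Rn n → ℝ) x ∂volume := by
    intro v
    rw [hGapp v, L2.inner_def]
    refine integral_congr_ae (Filter.Eventually.of_forall fun x => ?_)
    simp only [RCLike.inner_apply, starRingEnd_apply, star_trivial]
    exact mul_comm _ _
  set sgn : Rn n → ℝ := fun x => if 0 ≤ G' x then 1 else -1 with hsgn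
  have hsgnmeas : Measurable sgn :=
    Measurable.ite (measurableSet_le measurable_const hG'meas) measurable_const measurable_const
  have hsgnmul : ∀ x, G' x * sgn x = |G' x| := by
    intro x
    simp only [hsgn]
    by_cases hx : 0 ≤ G' x
    · rw [if_pos hx, mul_one, abs_of_nonneg hx]
    · rw [if_neg hx, abs_of_neg (lt_of_not_ge hx)]; ring
  have hsgnabs : ∀ x, |sgn x| = 1 := by
    intro x; simp only [hsgn]; split <;> simp
  set χ : Rn n → ℝ := (B m).indicator (fun _ => (1:ℝ)) with hχ
  have hχmeas : Measurable χ := measurable_const.indicator measurableSet_ball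
  have hχnonneg : ∀ x, 0 ≤ χ x := fun x => Set.indicator_nonneg (fun _ _ => zero_le_one) x
  have hmain : ∀ h : Rn n → ℝ, h ∈ X.carrier → X.norm h ≤ 1 →
      ∫⁻ x, ENNReal.ofReal (|h x| * χ x * |G' x|) ≤ ENNReal.ofReal c := by
    intro h hh hh1
    set w : ℕ → Rn n → ℝ := fun k x => min |h x| k * χ x * |G' x| with hw
    set t : ℕ → Rn n → ℝ := fun k x => (min |h x| k * χ x) * sgn x with htdef
    have hhmeas := X.aemeasurable hh
    have hwnonneg : ∀ k x, 0 ≤ w k x := by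
      intro k x
      have h0 : 0 ≤ min |h x| (k:ℝ) := le_min (abs_nonneg _) (Nat.cast_nonneg k)
      have h1 := hχnonneg x
      show (0:ℝ) ≤ min |h x| k * χ x * |G' x|
      positivity
    have htmeas : ∀ k, AEMeasurable (t k) volume := fun k =>
      (((measurable_abs.comp_aemeasurable hhmeas).min aemeasurable_const).mul
        hχmeas.aemeasurable).mul hsgnmeas.aemeasurable
    have htabs : ∀ k x, |t k x| = min |h x| k * χ x := by
      intro k x
      simp only [htdef]
      rw [abs_mul, hsgnabs, mul_one, abs_mul,
        abs_of_nonneg (le_min (abs_nonneg _) (Nat.cast_nonneg k)),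
        abs_of_nonneg (hχnonneg x)]
    have htle : ∀ k x, |t k x| ≤ |h x| := by
      intro k x
      rw [htabs k x]
      by_cases hx : x ∈ B m
      · simp only [hχ]; rw [Set.indicator_of_mem hx, mul_one]; exact min_le_left _ _
      · simp only [hχ]; rw [Set.indicator_of_notMem hx, mul_zero]; exact abs_nonneg _
    have htmem : ∀ k, t k ∈ X.carrier ∧ X.norm (t k) ≤ 1 := by
      intro k
      have hres := hL h (t k) hh (htmeas k)
        (Filter.Eventually.of_forall fun x => htle k x)
      exact ⟨hres.1, hres.2.trans hh1⟩
    have ht2 : ∀ k, MemLp (t k) 2 volume := by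
      intro k
      have hdom2 : MemLp ((B m).indicator (fun _ => (k:ℝ))) 2 volume :=
        memLp_indicator_const 2 measurableSet_ball (k:ℝ) (Or.inr measure_ball_lt_top.ne)
      refine MemLp.of_le hdom2
        (htmeas k).aestronglyMeasurable (Filter.Eventually.of_forall fun x => ?_)
      rw [Real.norm_eq_abs, Real.norm_eq_abs, htabs k x]
      by_cases hx : x ∈ B m
      · simp only [hχ]
        rw [Set.indicator_of_mem hx, Set.indicator_of_mem hx, mul_one,
          abs_of_nonneg (show (0:ℝ) ≤ (k:ℝ) from Nat.cast_nonneg k)]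
        exact min_le_right _ _
      · simp only [hχ]
        rw [Set.indicator_of_notMem hx, Set.indicator_of_notMem hx, mul_zero]
        simp
    have htK : ∀ k, (ht2 k).toLp (t k) ∈ K := by
      intro k
      refine ⟨t k, (htmem k).1, (htmem k).2, fun x hx => ?_, (ht2 k).coeFn_toLp⟩
      simp only [htdef, hχ]
      rw [Set.indicator_of_notMem hx, mul_zero, zero_mul]
    have hΦt : ∀ k, ∫ x, w k x ∂volume < c := by
      intro k
      have h1 := hKlt _ (subset_closure (htK k))
      rw [hinner _] at h1
      have h2 : ∫ x, (↑↑G : Rn n → ℝ) x * (↑↑((ht2 k).toLp (t k)) : Rn n → ℝ) x ∂volume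
          = ∫ x, w k x ∂volume := by
        refine integral_congr_ae ?_
        filter_upwards [hGG', (ht2 k).coeFn_toLp] with x hx1 hx2
        rw [hx1, hx2]
        simp only [htdef, hw]
        calc G' x * (min |h x| k * χ x * sgn x)
            = (min |h x| k * χ x) * (G' x * sgn x) := by ring
          _ = min |h x| k * χ x * |G' x| := by rw [hsgnmul]
      rw [h2] at h1
      exact h1
    have hwmeas : ∀ k, AEMeasurable (w k) volume := fun k =>
      (((measurable_abs.comp_aemeasurable hhmeas).min aemeasurable_const).mul
        hχmeas.aemeasurable).mul hG'meas.abs.aemeasurable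
    have hwint : ∀ k, Integrable (w k) volume := by
      intro k
      have hdom : Integrable ((B m).indicator (fun y => (k:ℝ) * |G' y|)) volume := by
        rw [integrable_indicator_iff measurableSet_ball]
        exact hG'int.abs.const_mul _
      refine Integrable.mono' hdom (hwmeas k).aestronglyMeasurable
        (Filter.Eventually.of_forall fun x => ?_)
      rw [Real.norm_eq_abs, abs_of_nonneg (hwnonneg k x)]
      by_cases hx : x ∈ B m
      · rw [Set.indicator_of_mem hx]
        simp only [hw, hχ]
        rw [Set.indicator_of_mem hx, mul_one]
        exact mul_le_mul_of_nonneg_right (min_le_right _ _) (abs_nonneg _)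
      · rw [Set.indicator_of_notMem hx]
        simp only [hw, hχ]
        rw [Set.indicator_of_notMem hx, mul_zero, zero_mul]
    have hlk : ∀ k, ∫⁻ x, ENNReal.ofReal (w k x) ≤ ENNReal.ofReal c := by
      intro k
      rw [← ofReal_integral_eq_lintegral_ofReal (hwint k)
        (Filter.Eventually.of_forall fun x => hwnonneg k x)]
      exact ENNReal.ofReal_le_ofReal (hΦt k).le
    have hwmono : ∀ x, Monotone fun k => w k x := by
      intro x k k' hkk'
      simp only [hw]
      have : min |h x| (k:ℝ) ≤ min |h x| (k':ℝ) := min_le_min le_rfl (Nat.cast_le.2 hkk')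
      have h1 : 0 ≤ χ x := hχnonneg x
      have h2 : (0:ℝ) ≤ |G' x| := abs_nonneg _
      exact mul_le_mul_of_nonneg_right (mul_le_mul_of_nonneg_right this h1) h2
    have hwtend : ∀ x, Tendsto (fun k => w k x) atTop (nhds (|h x| * χ x * |G' x|)) := by
      intro x
      obtain ⟨M, hM⟩ := exists_nat_gt |h x|
      refine tendsto_atTop_of_eventually_const (i₀ := M) fun i hi => ?_
      simp only [hw]
      have : min |h x| (i:ℝ) = |h x| := min_eq_left (by
        have : (M:ℝ) ≤ i := Nat.cast_le.2 hi
        linarith)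
      rw [this]
    have hmct : ∫⁻ x, ENNReal.ofReal (|h x| * χ x * |G' x|)
        = ⨆ k, ∫⁻ x, ENNReal.ofReal (w k x) := by
      have hptsup : ∀ x, (⨆ k, ENNReal.ofReal (w k x))
          = ENNReal.ofReal (|h x| * χ x * |G' x|) := fun x =>
        LLiSup_ofReal_tendsto (hwmono x) (hwtend x)
      calc ∫⁻ x, ENNReal.ofReal (|h x| * χ x * |G' x|)
          = ∫⁻ x, ⨆ k, ENNReal.ofReal (w k x) := (lintegral_congr hptsup).symm
        _ = ⨆ k, ∫⁻ x, ENNReal.ofReal (w k x) := lintegral_iSup'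
            (fun k => ENNReal.measurable_ofReal.comp_aemeasurable (hwmeas k))
            (Filter.Eventually.of_forall fun x => fun k k' hkk' =>
              ENNReal.ofReal_le_ofReal (hwmono x hkk'))
    rw [hmct]
    exact iSup_le hlk
  set gfun : Rn n → ℝ := fun x => c⁻¹ * (χ x * |G' x|) with hgfun
  have hgmeas2 : AEMeasurable gfun volume :=
    ((hχmeas.mul hG'meas.abs).aemeasurable).const_mul _
  have hgnonneg : ∀ x, 0 ≤ gfun x := by
    intro x
    simp only [hgfun]
    have := hχnonneg x
    positivity
  have hgid : ∀ h : Rn n → ℝ, ∫⁻ x, ENNReal.ofReal |h x * gfun x|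
      = ENNReal.ofReal c⁻¹ * ∫⁻ x, ENNReal.ofReal (|h x| * χ x * |G' x|) := by
    intro h
    rw [← lintegral_const_mul' _ _ ENNReal.ofReal_ne_top]
    refine lintegral_congr fun x => ?_
    rw [← ENNReal.ofReal_mul (inv_nonneg.2 hcpos.le)]
    congr 1
    simp only [hgfun]
    rw [abs_mul, abs_of_nonneg (by have := hχnonneg x; positivity :
      (0:ℝ) ≤ c⁻¹ * (χ x * |G' x|))]
    ring
  have hgnorm : kotheDualNorm X.carrier X.norm gfun ≤ 1 := by
    refine iSup₂_le fun h hcond => ?_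
    rw [hgid h]
    calc ENNReal.ofReal c⁻¹ * ∫⁻ x, ENNReal.ofReal (|h x| * χ x * |G' x|)
        ≤ ENNReal.ofReal c⁻¹ * ENNReal.ofReal c :=
          mul_le_mul_right (hmain h hcond.1 hcond.2) _
      _ = ENNReal.ofReal (c⁻¹ * c) := (ENNReal.ofReal_mul (inv_nonneg.2 hcpos.le)).symm
      _ = 1 := by rw [inv_mul_cancel₀ hcpos.ne', ENNReal.ofReal_one]
  have hgdual : gfun ∈ kotheDual X.carrier := by
    refine ⟨hgmeas2, fun h hh => ?_⟩
    have hm2 : AEMeasurable (fun x => h x * gfun x) volume := (X.aemeasurable hh).mul hgmeas2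
    refine ⟨hm2.aestronglyMeasurable, ?_⟩
    rw [MeasureTheory.hasFiniteIntegral_iff_norm]
    have heqn : ∫⁻ x, ENNReal.ofReal ‖h x * gfun x‖ = ∫⁻ x, ENNReal.ofReal |h x * gfun x| := by
      simp only [Real.norm_eq_abs]
    rw [heqn]
    exact lt_of_le_of_lt (LLle_dualNorm hh)
      (ENNReal.mul_lt_top ENNReal.ofReal_lt_top (lt_of_le_of_lt hgnorm ENNReal.one_lt_top))
  refine ⟨gfun, ⟨hgdual, hgnorm⟩, ?_⟩
  have hφsupp : ∀ x, fm m x * χ x = fm m x := by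
    intro x
    by_cases hx : x ∈ B m
    · simp only [hχ]; rw [Set.indicator_of_mem hx, mul_one]
    · simp only [hfm, hχ]; rw [Set.indicator_of_notMem hx, Set.indicator_of_notMem hx,
        zero_mul]
  have hφG'int : Integrable (fun x => fm m x * |G' x|) volume := by
    have hdom : Integrable ((B m).indicator (fun y => (m:ℝ) * |G' y|)) volume := by
      rw [integrable_indicator_iff measurableSet_ball]
      exact hG'int.abs.const_mul _
    refine Integrable.mono' hdom ((hfm_meas m).mul hG'meas.abs.aemeasurable).aestronglyMeasurable
      (Filter.Eventually.of_forall fun x => ?_)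
    rw [Real.norm_eq_abs, abs_of_nonneg (mul_nonneg (hfm_nonneg m x) (abs_nonneg _))]
    by_cases hx : x ∈ B m
    · rw [Set.indicator_of_mem hx]
      refine mul_le_mul_of_nonneg_right ?_ (abs_nonneg _)
      simp only [hfm]
      rw [Set.indicator_of_mem hx]
      exact min_le_right _ _
    · simp only [hfm]
      rw [Set.indicator_of_notMem hx, Set.indicator_of_notMem hx, zero_mul]
  have hφG'int2 : Integrable (fun x => G' x * fm m x) volume := by
    refine Integrable.mono' hφG'int
      (hG'meas.aemeasurable.mul (hfm_meas m)).aestronglyMeasurable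
      (Filter.Eventually.of_forall fun x => ?_)
    rw [Real.norm_eq_abs, abs_mul, abs_of_nonneg (hfm_nonneg m x)]
    exact le_of_eq (mul_comm _ _)
  have hlow1 : c ≤ ∫ x, fm m x * |G' x| ∂volume := by
    have h1 : Φ u₀ = ∫ x, G' x * fm m x ∂volume := by
      rw [hinner u₀]
      refine integral_congr_ae ?_
      filter_upwards [hGG', hφ2.coeFn_toLp] with x hx1 hx2
      rw [hx1, hx2]
    have h2 : ∫ x, G' x * fm m x ∂volume ≤ ∫ x, fm m x * |G' x| ∂volume := by
      refine integral_mono hφG'int2 hφG'int fun x => ?_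
      calc G' x * fm m x ≤ |G' x| * fm m x :=
          mul_le_mul_of_nonneg_right (le_abs_self _) (hfm_nonneg m x)
        _ = fm m x * |G' x| := mul_comm _ _
    have h3 : c < Φ u₀ := hcΦ
    rw [h1] at h3
    linarith
  have h4 : ENNReal.ofReal c ≤ ∫⁻ x, ENNReal.ofReal (|fm m x| * χ x * |G' x|) := by
    have h5 : ∀ x, |fm m x| * χ x * |G' x| = fm m x * |G' x| := by
      intro x
      rw [abs_of_nonneg (hfm_nonneg m x), hφsupp x]
    calc ENNReal.ofReal c ≤ ENNReal.ofReal (∫ x, fm m x * |G' x| ∂volume) :=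
        ENNReal.ofReal_le_ofReal hlow1
      _ = ∫⁻ x, ENNReal.ofReal (fm m x * |G' x|) :=
        ofReal_integral_eq_lintegral_ofReal hφG'int
          (Filter.Eventually.of_forall fun x => mul_nonneg (hfm_nonneg m x) (abs_nonneg _))
      _ = ∫⁻ x, ENNReal.ofReal (|fm m x| * χ x * |G' x|) :=
        lintegral_congr fun x => by rw [h5 x]
  have hstep1 : (1:ℝ≥0∞) = ENNReal.ofReal c⁻¹ * ENNReal.ofReal c := by
    rw [← ENNReal.ofReal_mul (inv_nonneg.2 hcpos.le), inv_mul_cancel₀ hcpos.ne',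
      ENNReal.ofReal_one]
  rw [hstep1]
  refine (mul_le_mul_right h4 (ENNReal.ofReal c⁻¹)).trans ?_
  rw [← hgid (fm m)]
  refine lintegral_mono fun x => ENNReal.ofReal_le_ofReal ?_
  rw [abs_mul (fm m x) (gfun x), abs_mul (f x) (gfun x), abs_of_nonneg (hfm_nonneg m x)]
  exact mul_le_mul_of_nonneg_right (hfm_le m x) (abs_nonneg _)

end LLaux6
section LLaux7

open Set

variable {n : ℕ} {X : BanachInL0 n}

lemma LLnorming' (hL : X.PropL) (hF : X.PropF) {f : Rn n → ℝ} (hf : f ∈ X.carrier) :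
    ENNReal.ofReal (X.norm f)
      ≤ kotheDualNormE (kotheDual X.carrier) (kotheDualNorm X.carrier X.norm) f := by
  rcases eq_or_lt_of_le (X.norm_nonneg f) with h0 | hpos
  · rw [← h0]; simp
  have hstep : ∀ a : ℝ, 0 < a → a < X.norm f → ENNReal.ofReal a
      ≤ kotheDualNormE (kotheDual X.carrier) (kotheDualNorm X.carrier X.norm) f := by
    intro a ha haf
    have hmem' : a⁻¹ • f ∈ X.carrier := X.smul_mem _ hf
    have hnorm' : 1 < X.norm (a⁻¹ • f) := by
      rw [X.norm_smul, abs_of_nonneg (inv_nonneg.2 ha.le)]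
      have hd : (1:ℝ) < X.norm f / a := (one_lt_div ha).2 haf
      rwa [div_eq_inv_mul] at hd
    obtain ⟨g, hg, hlow⟩ := LLnorming hL hF hmem' hnorm'
    have heq : ∀ x, ENNReal.ofReal |(a⁻¹ • f) x * g x|
        = ENNReal.ofReal a⁻¹ * ENNReal.ofReal |g x * f x| := by
      intro x
      rw [← ENNReal.ofReal_mul (inv_nonneg.2 ha.le)]
      congr 1
      have hxx : (a⁻¹ • f) x * g x = a⁻¹ * (g x * f x) := by
        simp only [Pi.smul_apply, smul_eq_mul]; ring
      rw [hxx, abs_mul a⁻¹ (g x * f x), abs_of_nonneg (inv_nonneg.2 ha.le)]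
    have h1 : (1:ℝ≥0∞) ≤ ENNReal.ofReal a⁻¹ * ∫⁻ x, ENNReal.ofReal |g x * f x| := by
      calc (1:ℝ≥0∞) ≤ ∫⁻ x, ENNReal.ofReal |(a⁻¹ • f) x * g x| := hlow
        _ = ENNReal.ofReal a⁻¹ * ∫⁻ x, ENNReal.ofReal |g x * f x| := by
          rw [lintegral_congr heq, lintegral_const_mul' _ _ ENNReal.ofReal_ne_top]
    have hkey : ENNReal.ofReal a ≤ ∫⁻ x, ENNReal.ofReal |g x * f x| := by
      calc ENNReal.ofReal a = ENNReal.ofReal a * 1 := (mul_one _).symm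
        _ ≤ ENNReal.ofReal a * (ENNReal.ofReal a⁻¹ * ∫⁻ x, ENNReal.ofReal |g x * f x|) :=
          mul_le_mul_right h1 _
        _ = ∫⁻ x, ENNReal.ofReal |g x * f x| := by
          rw [← mul_assoc, ← ENNReal.ofReal_mul ha.le, mul_inv_cancel₀ ha.ne',
            ENNReal.ofReal_one, one_mul]
    exact hkey.trans (le_iSup₂_of_le g hg le_rfl)
  have hseq : Tendsto (fun k : ℕ => X.norm f - 1/(k+1)) atTop (nhds (X.norm f)) := by
    have h1 := tendsto_one_div_add_atTop_nhds_zero_nat (𝕜 := ℝ)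
    have h2 := (tendsto_const_nhds (x := X.norm f) (f := (atTop : Filter ℕ))).sub h1
    simpa using h2
  have hofreal : Tendsto (fun k : ℕ => ENNReal.ofReal (X.norm f - 1/(k+1))) atTop
      (nhds (ENNReal.ofReal (X.norm f))) := (ENNReal.continuous_ofReal.tendsto _).comp hseq
  refine le_of_tendsto hofreal ?_
  have hev : ∀ᶠ k : ℕ in atTop, 0 < X.norm f - 1/(k+1) :=
    hseq.eventually (eventually_gt_nhds hpos)
  filter_upwards [hev] with k hk
  refine hstep _ hk ?_
  have h3 : (0:ℝ) < 1/((k:ℝ)+1) := by positivity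
  linarith

lemma LLsubset_XX {f : Rn n → ℝ} (hf : f ∈ X.carrier) :
    f ∈ kotheDual (kotheDual X.carrier) := by
  refine ⟨X.aemeasurable hf, fun g hg => ?_⟩
  have h1 := hg.2 f hf
  have heq : (fun x => g x * f x) = fun x => f x * g x := funext fun x => mul_comm _ _
  rw [heq]
  exact h1

lemma LLdualE_le {f : Rn n → ℝ} (hf : f ∈ X.carrier) :
    kotheDualNormE (kotheDual X.carrier) (kotheDualNorm X.carrier X.norm) f
      ≤ ENNReal.ofReal (X.norm f) := by
  refine iSup₂_le fun g hg => ?_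
  have heq : ∫⁻ x, ENNReal.ofReal |g x * f x| = ∫⁻ x, ENNReal.ofReal |f x * g x| :=
    lintegral_congr fun x => by rw [mul_comm]
  rw [heq]
  calc ∫⁻ x, ENNReal.ofReal |f x * g x|
      ≤ ENNReal.ofReal (X.norm f) * kotheDualNorm X.carrier X.norm g := LLle_dualNorm hf
    _ ≤ ENNReal.ofReal (X.norm f) * 1 := mul_le_mul_right hg.2 _
    _ = ENNReal.ofReal (X.norm f) := mul_one _

lemma LLmct {g : Rn n → ℝ} {F : ℕ → Rn n → ℝ} {f : Rn n → ℝ}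
    (hg : AEMeasurable g volume) (hFk : ∀ k, AEMeasurable (F k) volume)
    (hae : ∀ᵐ x ∂volume, (∀ k, 0 ≤ F k x) ∧ Monotone (fun k => F k x) ∧
      Tendsto (fun k => F k x) atTop (nhds (f x))) :
    ∫⁻ x, ENNReal.ofReal |g x * f x| = ⨆ k, ∫⁻ x, ENNReal.ofReal |g x * F k x| := by
  have hmeas : ∀ k, AEMeasurable (fun x => ENNReal.ofReal |g x * F k x|) volume := fun k =>
    ENNReal.measurable_ofReal.comp_aemeasurable
      (measurable_abs.comp_aemeasurable (hg.mul (hFk k)))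
  have hmono : ∀ᵐ x ∂volume, Monotone fun k => ENNReal.ofReal |g x * F k x| := by
    filter_upwards [hae] with x hx
    intro i j hij
    refine ENNReal.ofReal_le_ofReal ?_
    rw [abs_mul, abs_mul, abs_of_nonneg (hx.1 i), abs_of_nonneg (hx.1 j)]
    exact mul_le_mul_of_nonneg_left (hx.2.1 hij) (abs_nonneg _)
  have h1 := lintegral_iSup' hmeas hmono
  rw [← h1]
  refine lintegral_congr_ae ?_
  filter_upwards [hae] with x hx
  have hf0 : 0 ≤ f x := ge_of_tendsto hx.2.2 (Filter.Eventually.of_forall fun k => hx.1 k)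
  have hmono2 : Monotone fun k => |g x| * F k x := fun i j hij =>
    mul_le_mul_of_nonneg_left (hx.2.1 hij) (abs_nonneg _)
  have htend : Tendsto (fun k => |g x| * F k x) atTop (nhds (|g x| * f x)) :=
    hx.2.2.const_mul _
  have heqfun : (fun k => ENNReal.ofReal |g x * F k x|)
      = fun k => ENNReal.ofReal (|g x| * F k x) := funext fun k => by
    rw [abs_mul, abs_of_nonneg (hx.1 k)]
  rw [show |g x * f x| = |g x| * f x by rw [abs_mul, abs_of_nonneg hf0], heqfun]
  exact (LLiSup_ofReal_tendsto hmono2 htend).symm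

end LLaux7
/-- **Lorentz–Luxemburg theorem.** For a Banach space `X ⊆ L⁰(ℝⁿ)` with the
lattice and saturation properties, `X` has the Fatou property if and only if the
second Köthe dual `X''` coincides with `X` with equality of norms. -/
theorem lorentz_luxemburg {n : ℕ} (X : BanachInL0 n)
    (hL : X.PropL) (hSa : X.PropSa) :
    X.PropF ↔
      (kotheDual (kotheDual X.carrier) = X.carrier ∧
        ∀ f ∈ X.carrier,
          kotheDualNormE (kotheDual X.carrier) (kotheDualNorm X.carrier X.norm) f
            = ENNReal.ofReal (X.norm f)) := by
  constructor
  · intro hF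
    have hnorm : ∀ f ∈ X.carrier,
        kotheDualNormE (kotheDual X.carrier) (kotheDualNorm X.carrier X.norm) f
          = ENNReal.ofReal (X.norm f) :=
      fun f hf => le_antisymm (LLdualE_le hf) (LLnorming' hL hF hf)
    refine ⟨Set.Subset.antisymm ?_ (fun f hf => LLsubset_XX hf), hnorm⟩
    intro f hf
    have hfmeas : AEMeasurable f volume := hf.1
    obtain ⟨D, hDmeas, hDmono, hDmem, hDnull⟩ := LLexhaustion hL hSa
    have hDmono' : Monotone D := monotone_nat_of_le_succ hDmono
    set fk : ℕ → Rn n → ℝ :=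
      fun k x => (Metric.ball (0:Rn n) (k+1) ∩ D k).indicator (fun y => min |f y| k) x
      with hfk
    have hfkmeas : ∀ k, AEMeasurable (fk k) volume := fun k =>
      ((measurable_abs.comp_aemeasurable hfmeas).min aemeasurable_const).indicator
        (measurableSet_ball.inter (hDmeas k))
    have hfknonneg : ∀ k x, 0 ≤ fk k x := fun k x =>
      Set.indicator_nonneg (fun y _ => le_min (abs_nonneg _) (Nat.cast_nonneg k)) x
    have hfkle : ∀ k x, fk k x ≤ |f x| := by
      intro k x
      by_cases hx : x ∈ Metric.ball (0:Rn n) (k+1) ∩ D k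
      · simp only [hfk]; rw [Set.indicator_of_mem hx]; exact min_le_left _ _
      · simp only [hfk]; rw [Set.indicator_of_notMem hx]; exact abs_nonneg _
    have hfkmem : ∀ k, fk k ∈ X.carrier := by
      intro k
      have hdommem : (k:ℝ) • (D k).indicator (fun _ => (1:ℝ)) ∈ X.carrier :=
        X.smul_mem _ (hDmem k)
      refine (hL _ (fk k) hdommem (hfkmeas k) (Filter.Eventually.of_forall fun x => ?_)).1
      rw [abs_of_nonneg (hfknonneg k x)]
      by_cases hx : x ∈ Metric.ball (0:Rn n) (k+1) ∩ D k
      · have hD1 : (D k).indicator (fun _ => (1:ℝ)) x = 1 := Set.indicator_of_mem hx.2 _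
        have hR : |((k:ℝ) • (D k).indicator (fun _ => (1:ℝ))) x| = (k:ℝ) := by
          simp only [Pi.smul_apply, smul_eq_mul, hD1, mul_one]
          exact abs_of_nonneg (Nat.cast_nonneg k)
        rw [hR]
        simp only [hfk]
        rw [Set.indicator_of_mem hx]
        exact min_le_right _ _
      · simp only [hfk]
        rw [Set.indicator_of_notMem hx]
        exact abs_nonneg _
    have hfkmono : ∀ x, Monotone fun k => fk k x := by
      intro x k k' hkk'
      by_cases hx : x ∈ Metric.ball (0:Rn n) (k+1) ∩ D k
      · have hx' : x ∈ Metric.ball (0:Rn n) (k'+1) ∩ D k' := by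
          refine ⟨Metric.ball_subset_ball ?_ hx.1, hDmono' hkk' hx.2⟩
          have : (k:ℝ) ≤ k' := Nat.cast_le.2 hkk'
          linarith
        simp only [hfk]
        rw [Set.indicator_of_mem hx, Set.indicator_of_mem hx']
        exact min_le_min le_rfl (Nat.cast_le.2 hkk')
      · simp only [hfk]
        rw [Set.indicator_of_notMem hx]
        exact hfknonneg k' x
    have hfktend : ∀ᵐ x ∂volume, Tendsto (fun k => fk k x) atTop (nhds |f x|) := by
      have hU : ∀ᵐ x ∂volume, x ∈ ⋃ k, D k := by
        rw [MeasureTheory.ae_iff]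
        have hcompl : {a : Rn n | ¬ a ∈ ⋃ k, D k} = (⋃ k, D k)ᶜ := rfl
        rw [hcompl]
        exact hDnull
      filter_upwards [hU] with x hxU
      obtain ⟨k₀, hk₀⟩ := Set.mem_iUnion.1 hxU
      obtain ⟨M, hM⟩ := exists_nat_gt (max ‖x‖ |f x|)
      refine tendsto_atTop_of_eventually_const (i₀ := max k₀ M) fun i hi => ?_
      have hik : k₀ ≤ i := le_trans (le_max_left _ _) hi
      have hiM : (M:ℝ) ≤ i := Nat.cast_le.2 (le_trans (le_max_right _ _) hi)
      have hxB : x ∈ Metric.ball (0:Rn n) (i+1) := by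
        simp only [Metric.mem_ball, dist_zero_right]
        have := le_max_left ‖x‖ |f x|
        linarith
      have hxD : x ∈ D i := hDmono' hik hk₀
      simp only [hfk]
      rw [Set.indicator_of_mem (Set.mem_inter hxB hxD)]
      refine min_eq_left ?_
      have := le_max_right ‖x‖ |f x|
      linarith
    have hfin := LLdualE_lt_top hL hSa hf
    have hfkbound : ∀ k, X.norm (fk k)
        ≤ (kotheDualNormE (kotheDual X.carrier) (kotheDualNorm X.carrier X.norm) f).toReal := by
      intro k
      have h1 := LLnorming' hL hF (hfkmem k)
      have h2 : kotheDualNormE (kotheDual X.carrier) (kotheDualNorm X.carrier X.norm) (fk k)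
          ≤ kotheDualNormE (kotheDual X.carrier) (kotheDualNorm X.carrier X.norm) f := by
        refine iSup₂_mono fun g hg => lintegral_mono fun x => ENNReal.ofReal_le_ofReal ?_
        rw [abs_mul, abs_mul, abs_of_nonneg (hfknonneg k x)]
        exact mul_le_mul_of_nonneg_left (hfkle k x) (abs_nonneg _)
      have h3 := h1.trans h2
      rwa [ENNReal.ofReal_le_iff_le_toReal hfin.ne] at h3
    have hFat := hF fk (fun x => |f x|) hfkmem (measurable_abs.comp_aemeasurable hfmeas)
      (by filter_upwards [hfktend] with x hx
          exact ⟨fun k => hfknonneg k x, hfkmono x, hx⟩)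
      ⟨(kotheDualNormE (kotheDual X.carrier) (kotheDualNorm X.carrier X.norm) f).toReal,
        by rintro _ ⟨k, rfl⟩; exact hfkbound k⟩
    exact (hL (fun x => |f x|) f hFat.1 hfmeas
      (Filter.Eventually.of_forall fun x => by simp)).1
  · rintro ⟨hset, hnormeq⟩
    intro F f hFmem hfmeas hae hbdd
    have hCk : ∀ k, X.norm (F k) ≤ ⨆ j, X.norm (F j) := fun k => le_ciSup hbdd k
    have hC0 : 0 ≤ ⨆ j, X.norm (F j) := le_trans (X.norm_nonneg (F 0)) (hCk 0)
    have hfX'' : f ∈ kotheDual (kotheDual X.carrier) := by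
      refine ⟨hfmeas, fun g hg => ?_⟩
      have hgfin := LLdualNorm_lt_top hL hg
      have hmct := LLmct hg.1 (fun k => X.aemeasurable (hFmem k)) hae
      have hmeas2 : AEMeasurable (fun x => g x * f x) volume := hg.1.mul hfmeas
      refine ⟨hmeas2.aestronglyMeasurable, ?_⟩
      rw [MeasureTheory.hasFiniteIntegral_iff_norm]
      have heqn : ∫⁻ x, ENNReal.ofReal ‖g x * f x‖ = ∫⁻ x, ENNReal.ofReal |g x * f x| := by
        simp only [Real.norm_eq_abs]
      rw [heqn, hmct]
      have hb : ∀ k, ∫⁻ x, ENNReal.ofReal |g x * F k x|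
          ≤ ENNReal.ofReal (⨆ j, X.norm (F j)) * kotheDualNorm X.carrier X.norm g := by
        intro k
        have h1 : ∫⁻ x, ENNReal.ofReal |g x * F k x| = ∫⁻ x, ENNReal.ofReal |F k x * g x| :=
          lintegral_congr fun x => by rw [mul_comm]
        rw [h1]
        calc ∫⁻ x, ENNReal.ofReal |F k x * g x|
            ≤ ENNReal.ofReal (X.norm (F k)) * kotheDualNorm X.carrier X.norm g :=
              LLle_dualNorm (hFmem k)
          _ ≤ ENNReal.ofReal (⨆ j, X.norm (F j)) * kotheDualNorm X.carrier X.norm g :=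
              mul_le_mul_left (ENNReal.ofReal_le_ofReal (hCk k)) _
      exact lt_of_le_of_lt (iSup_le hb)
        (ENNReal.mul_lt_top ENNReal.ofReal_lt_top hgfin)
    have hfX : f ∈ X.carrier := hset ▸ hfX''
    refine ⟨hfX, ?_⟩
    have h2 : kotheDualNormE (kotheDual X.carrier) (kotheDualNorm X.carrier X.norm) f
        = ⨆ k, kotheDualNormE (kotheDual X.carrier) (kotheDualNorm X.carrier X.norm) (F k) := by
      calc kotheDualNormE (kotheDual X.carrier) (kotheDualNorm X.carrier X.norm) f
          = ⨆ (g : Rn n → ℝ) (_ : g ∈ kotheDual X.carrier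
              ∧ kotheDualNorm X.carrier X.norm g ≤ 1),
              ⨆ k, ∫⁻ x, ENNReal.ofReal |g x * F k x| := by
            refine iSup_congr fun g => iSup_congr fun hg => ?_
            exact LLmct hg.1.1 (fun k => X.aemeasurable (hFmem k)) hae
        _ = ⨆ k, ⨆ (g : Rn n → ℝ) (_ : g ∈ kotheDual X.carrier
              ∧ kotheDualNorm X.carrier X.norm g ≤ 1),
              ∫⁻ x, ENNReal.ofReal |g x * F k x| := by
            rw [iSup_comm]
            exact iSup_congr fun k => iSup_comm
        _ = ⨆ k, kotheDualNormE (kotheDual X.carrier) (kotheDualNorm X.carrier X.norm) (F k) :=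
            rfl
    have heq1 : ENNReal.ofReal (X.norm f) = ⨆ k, ENNReal.ofReal (X.norm (F k)) := by
      rw [← hnormeq f hfX, h2]
      exact iSup_congr fun k => hnormeq (F k) (hFmem k)
    rw [← LLofReal_ciSup hbdd] at heq1
    exact (ENNReal.ofReal_eq_ofReal_iff (X.norm_nonneg f) hC0).1 heq1

end
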